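/- Let C < 0 < D with C + D t₂ > 0, and t₁ = 1/t₂ with t₂ > 1. For z = x + iy on the circle x² + y² = (t₂ − ε)², one has |(t₁ − z)(C + D t₂)|² − |(t₁ − t₂)(C + D z)|² = 2(C + D t₁)(C t₁ + D t₂²)(t₂ − x) − 2 t₂ (C + D t₁)(C − D t₁ + 2 D t₂)ε + O(ε²), where the implied constant depends only on C, D, t₁, t₂. -/

import Mathlib

theorem modulus_difference_expansion
    (t₂ C D : ℝ) (ht2 : 1 < t₂) (t₁ : ℝ) (ht1 : t₁ = 1 / t₂)
    (hC : C < 0) (hD : 0 < D) (hCD : C + D * t₂ > 0) :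
    ∃ K : ℝ, 0 < K ∧ ∀ ε : ℝ, 0 < ε → ∀ x y : ℝ,
      x ^ 2 + y ^ 2 = (t₂ - ε) ^ 2 →
      |‖((t₁ : ℂ) - (x + y * Complex.I)) * ((C : ℂ) + D * t₂)‖ ^ 2
          - ‖((t₁ : ℂ) - t₂) * ((C : ℂ) + D * (x + y * Complex.I))‖ ^ 2
          - (2 * (C + D * t₁) * (C * t₁ + D * t₂ ^ 2) * (t₂ - x)
              - 2 * t₂ * (C + D * t₁) * (C - D * t₁ + 2 * D * t₂) * ε)|
        ≤ K * ε ^ 2 := by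
  subst ht1
  have ht0 : t₂ ≠ 0 := by positivity
  set c : ℝ := (C + D * t₂) ^ 2 - (1 / t₂ - t₂) ^ 2 * D ^ 2 with hc
  refine ⟨|c| + 1, by positivity, ?_⟩
  intro ε hε x y hxy
  have hA : ‖(((1 / t₂ : ℝ) : ℂ) - (x + y * Complex.I)) * ((C : ℂ) + D * t₂)‖ ^ 2
      = ((1 / t₂ - x) ^ 2 + y ^ 2) * ((C + D * t₂) ^ 2) := by
    rw [norm_mul, mul_pow, Complex.sq_norm, Complex.sq_norm]
    simp [Complex.normSq_apply]
    ring
  have hB : ‖(((1 / t₂ : ℝ) : ℂ) - t₂) * ((C : ℂ) + D * (x + y * Complex.I))‖ ^ 2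
      = (1 / t₂ - t₂) ^ 2 * ((C + D * x) ^ 2 + (D * y) ^ 2) := by
    rw [norm_mul, mul_pow, Complex.sq_norm, Complex.sq_norm]
    simp [Complex.normSq_apply]
    ring
  rw [hA, hB]
  have key : ((1 / t₂ - x) ^ 2 + y ^ 2) * ((C + D * t₂) ^ 2)
      - (1 / t₂ - t₂) ^ 2 * ((C + D * x) ^ 2 + (D * y) ^ 2)
      - (2 * (C + D * (1 / t₂)) * (C * (1 / t₂) + D * t₂ ^ 2) * (t₂ - x)
          - 2 * t₂ * (C + D * (1 / t₂)) * (C - D * (1 / t₂) + 2 * D * t₂) * ε)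
      = c * ε ^ 2 := by
    rw [hc]
    linear_combination ((C + D * t₂) ^ 2 - (1 / t₂ - t₂) ^ 2 * D ^ 2) * hxy
  rw [key, abs_mul, abs_pow, abs_of_pos hε]
  have : |ε| ^ 2 = ε ^ 2 := by rw [sq_abs]
  nlinarith [abs_nonneg c, sq_nonneg ε]
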